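/- arXiv:2008.08279 — 2 statements merged into one kernel-verified Lean document; each statement's English description precedes it below -/
import Mathlib

section
/- Let q be an odd prime power with q ≡ 1 (mod 4) and let d ≥ 3 be odd. Then there exist a set 𝒫 of points in 𝔽_q^d and a set Π of affine hyperplanes in 𝔽_q^d with |𝒫| = |Π| = q^{(d−1)/2} such that every point of 𝒫 lies on every hyperplane of Π, i.e., I(𝒫,Π) = |𝒫||Π| = q^{d−1}. -/
open Finset

/-- The affine hyperplane `{x : a · x = b}` in `𝔽_q^d`, as a finset. -/
def hyperplane (d : ℕ) (F : Type) [Field F] [Fintype F] [DecidableEq F]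
    (a : Fin d → F) (b : F) : Finset (Fin d → F) :=
  Finset.univ.filter fun x => ∑ i, a i * x i = b

lemma sum_range_two_mul {M : Type*} [AddCommMonoid M] (g : ℕ → M) (k : ℕ) :
    ∑ n ∈ Finset.range (2 * k), g n = ∑ j ∈ Finset.range k, (g (2 * j) + g (2 * j + 1)) := by
  induction k with
  | zero => simp
  | succ k ih =>
    have h2 : 2 * (k + 1) = (2 * k + 1) + 1 := by ring
    rw [h2, Finset.sum_range_succ, Finset.sum_range_succ, ih, Finset.sum_range_succ]
    ring_nf
    abel

/-- Example 2.1: sharpness of the incidence bound. If `q ≡ 1 (mod 4)` and `d ≥ 3` is odd,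
there are a point set `𝒫` and a set `Π` of affine hyperplanes with
`|𝒫| = |Π| = q^{(d-1)/2}` such that every point of `𝒫` lies on every hyperplane of `Π`,
so `I(𝒫, Π) = |𝒫||Π| = q^{d-1}`. -/
theorem incidence_sharpness_one_mod_four (d : ℕ) (hdodd : d % 2 = 1) (hd3 : 3 ≤ d)
    (F : Type) [Field F] [Fintype F] [DecidableEq F]
    (hq : Odd (Fintype.card F)) (hq1 : Fintype.card F % 4 = 1) :
    ∃ (P : Finset (Fin d → F)) (Pi : Finset (Finset (Fin d → F))),
      (∀ h ∈ Pi, ∃ (a : Fin d → F) (b : F), a ≠ 0 ∧ h = hyperplane d F a b) ∧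
      P.card = Fintype.card F ^ ((d - 1) / 2) ∧
      Pi.card = Fintype.card F ^ ((d - 1) / 2) ∧
      (∀ p ∈ P, ∀ h ∈ Pi, p ∈ h) ∧
      ((P ×ˢ Pi).filter fun pair => pair.1 ∈ pair.2).card = Fintype.card F ^ (d - 1) := by
  classical
  set q := Fintype.card F with hqdef
  -- extract i with i * i = -1
  have hsq : IsSquare (-1 : F) := by
    rw [FiniteField.isSquare_neg_one_iff]
    omega
  obtain ⟨i, hi⟩ := hsq
  -- set k
  set k := (d - 1) / 2 with hk
  have hdk : d = 2 * k + 1 := by omega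
  have hk1 : 1 ≤ k := by omega
  -- helper to coerce nat-indexed access
  let s' : (Fin k → F) → ℕ → F := fun s n => if h : n / 2 < k then s ⟨n / 2, h⟩ else 0
  -- points
  let f : (Fin k → F) → (Fin d → F) := fun t m =>
    if m.val < 2 * k then (if m.val % 2 = 0 then s' t m.val else i * s' t m.val) else 0
  -- hyperplane normals
  let a : (Fin k → F) → (Fin d → F) := fun s m =>
    if m.val < 2 * k then (if m.val % 2 = 0 then -i * s' s m.val else s' s m.val) else 1
  have hs2j : ∀ (s : Fin k → F) (j : Fin k), s' s (2 * j) = s j := by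
    intro s j
    have h : (2 * (j : ℕ)) / 2 = (j : ℕ) := by omega
    simp only [s', h, j.isLt, dif_pos]
  have hs2j1 : ∀ (s : Fin k → F) (j : Fin k), s' s (2 * j + 1) = s j := by
    intro s j
    have h : (2 * (j : ℕ) + 1) / 2 = (j : ℕ) := by omega
    simp only [s', h, j.isLt, dif_pos]
  -- key incidence computation
  have key : ∀ (s t : Fin k → F), ∑ m : Fin d, a s m * f t m = 0 := by
    intro s t
    have := Fin.sum_univ_eq_sum_range (fun n =>
      (if n < 2 * k then (if n % 2 = 0 then -i * s' s n else s' s n) else 1) *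
      (if n < 2 * k then (if n % 2 = 0 then s' t n else i * s' t n) else 0)) d
    rw [show (∑ m : Fin d, a s m * f t m) = _ from rfl]
    calc ∑ m : Fin d, a s m * f t m
        = ∑ n ∈ Finset.range d, ((if n < 2 * k then (if n % 2 = 0 then -i * s' s n else s' s n) else 1) *
          (if n < 2 * k then (if n % 2 = 0 then s' t n else i * s' t n) else 0)) := this
      _ = 0 := by
          rw [hdk, Finset.sum_range_succ, sum_range_two_mul]
          have h2k : ¬ (2 * k < 2 * k) := lt_irrefl _
          rw [if_neg h2k, if_neg h2k, mul_zero, add_zero]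
          apply Finset.sum_eq_zero
          intro j hj
          rw [Finset.mem_range] at hj
          have h1 : 2 * j < 2 * k := by omega
          have h2 : 2 * j + 1 < 2 * k := by omega
          have h3 : (2 * j) % 2 = 0 := by omega
          have h4 : (2 * j + 1) % 2 ≠ 0 := by omega
          rw [if_pos h1, if_pos h1, if_pos h2, if_pos h2, if_pos h3, if_pos h3,
            if_neg h4, if_neg h4]
          have e1 : s' s (2 * j) = s ⟨j, by omega⟩ := hs2j s ⟨j, by omega⟩
          have e2 : s' t (2 * j) = t ⟨j, by omega⟩ := hs2j t ⟨j, by omega⟩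
          have e3 : s' s (2 * j + 1) = s ⟨j, by omega⟩ := hs2j1 s ⟨j, by omega⟩
          have e4 : s' t (2 * j + 1) = t ⟨j, by omega⟩ := hs2j1 t ⟨j, by omega⟩
          rw [e1, e2, e3, e4]
          ring
  -- f is injective
  have hfinj : Function.Injective f := by
    intro t t' h
    funext j
    have hj2 : 2 * (j : ℕ) < d := by omega
    have := congrFun h ⟨2 * (j : ℕ), hj2⟩
    simp only [f] at this
    have h1 : 2 * (j : ℕ) < 2 * k := by omega
    have h3 : (2 * (j : ℕ)) % 2 = 0 := by omega
    rw [if_pos h1, if_pos h1, if_pos h3, if_pos h3, hs2j, hs2j] at this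
    exact this
  -- the hyperplane map is injective
  have hainj : Function.Injective (fun s => hyperplane d F (a s) 0) := by
    intro s s' h
    by_contra hne
    have ⟨j, hj⟩ : ∃ j : Fin k, s j ≠ s' j := by
      by_contra hc
      push_neg at hc
      exact hne (funext hc)
    -- witness point
    let x : Fin d → F := fun m =>
      if m.val = 2 * (j : ℕ) + 1 then 1 else if m.val = 2 * k then -(s j) else 0
    have hx : ∀ (u : Fin k → F), ∑ m : Fin d, a u m * x m = u j - s j := by
      intro u
      have hm1 : 2 * (j : ℕ) + 1 < d := by omega
      have hm2 : 2 * k < d := by omega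
      have hne12 : (⟨2 * (j : ℕ) + 1, hm1⟩ : Fin d) ≠ ⟨2 * k, hm2⟩ := by
        intro hc
        have := Fin.mk.injEq (2 * (j : ℕ) + 1) hm1 (2 * k) hm2 ▸ hc
        simp only [Fin.mk.injEq] at hc
        omega
      have hzero : ∀ m : Fin d, m ≠ ⟨2 * (j : ℕ) + 1, hm1⟩ → m ≠ ⟨2 * k, hm2⟩ →
          a u m * x m = 0 := by
        intro m hne1 hne2
        have h1 : m.val ≠ 2 * (j : ℕ) + 1 := fun hc => hne1 (Fin.ext hc)
        have h2 : m.val ≠ 2 * k := fun hc => hne2 (Fin.ext hc)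
        simp only [x, if_neg h1, if_neg h2, mul_zero]
      rw [← Finset.sum_subset (Finset.subset_univ {(⟨2 * (j : ℕ) + 1, hm1⟩ : Fin d),
        ⟨2 * k, hm2⟩}) (fun m _ hm => by
          simp only [Finset.mem_insert, Finset.mem_singleton] at hm
          push_neg at hm
          exact hzero m hm.1 hm.2)]
      rw [Finset.sum_pair hne12]
      have ha1 : a u ⟨2 * (j : ℕ) + 1, hm1⟩ = u j := by
        have h1 : 2 * (j : ℕ) + 1 < 2 * k := by omega
        have h2 : (2 * (j : ℕ) + 1) % 2 ≠ 0 := by omega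
        simp only [a, if_pos h1, if_neg h2]
        exact hs2j1 u j
      have ha2 : a u ⟨2 * k, hm2⟩ = 1 := by
        simp only [a, lt_irrefl, if_neg (lt_irrefl (2 * k)), if_false]
      have hx1 : x ⟨2 * (j : ℕ) + 1, hm1⟩ = 1 := by
        simp only [x, if_pos rfl]
      have hx2 : x ⟨2 * k, hm2⟩ = -(s j) := by
        have h1 : 2 * k ≠ 2 * (j : ℕ) + 1 := by omega
        simp only [x, if_neg h1, if_pos rfl, if_true]
      rw [ha1, ha2, hx1, hx2]
      ring
    have hmem : x ∈ hyperplane d F (a s) 0 := by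
      simp only [hyperplane, Finset.mem_filter, Finset.mem_univ, true_and]
      rw [hx s]; ring
    rw [show hyperplane d F (a s) 0 = hyperplane d F (a s') 0 from h] at hmem
    simp only [hyperplane, Finset.mem_filter, Finset.mem_univ, true_and] at hmem
    rw [hx s'] at hmem
    have : s j = s' j := by linear_combination -hmem
    exact hj this
  -- assemble
  refine ⟨Finset.image f Finset.univ,
    Finset.image (fun s => hyperplane d F (a s) 0) Finset.univ, ?_, ?_, ?_, ?_, ?_⟩
  · intro h hh
    simp only [Finset.mem_image, Finset.mem_univ, true_and] at hh
    obtain ⟨s, rfl⟩ := hh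
    refine ⟨a s, 0, ?_, rfl⟩
    intro hc
    have hm2 : 2 * k < d := by omega
    have := congrFun hc ⟨2 * k, hm2⟩
    simp only [a, if_neg (lt_irrefl (2 * k)), Pi.zero_apply] at this
    exact one_ne_zero this
  · rw [Finset.card_image_of_injective _ hfinj, Finset.card_univ, Fintype.card_fun]
    simp [hk, hqdef]
  · rw [Finset.card_image_of_injective _ hainj, Finset.card_univ, Fintype.card_fun]
    simp [hk, hqdef]
  · intro p hp h hh
    simp only [Finset.mem_image, Finset.mem_univ, true_and] at hp hh
    obtain ⟨t, rfl⟩ := hp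
    obtain ⟨s, rfl⟩ := hh
    simp only [hyperplane, Finset.mem_filter, Finset.mem_univ, true_and]
    exact key s t
  · have hall : ∀ pair ∈ (Finset.image f Finset.univ) ×ˢ
        (Finset.image (fun s => hyperplane d F (a s) 0) Finset.univ),
        pair.1 ∈ pair.2 := by
      intro pair hpair
      rw [Finset.mem_product] at hpair
      obtain ⟨hp, hh⟩ := hpair
      simp only [Finset.mem_image, Finset.mem_univ, true_and] at hp hh
      obtain ⟨t, ht⟩ := hp
      obtain ⟨s, hs⟩ := hh
      rw [← ht, ← hs]
      simp only [hyperplane, Finset.mem_filter, Finset.mem_univ, true_and]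
      exact key s t
    rw [Finset.filter_true_of_mem hall, Finset.card_product,
      Finset.card_image_of_injective _ hfinj, Finset.card_image_of_injective _ hainj,
      Finset.card_univ, Fintype.card_fun, Fintype.card_fin, ← pow_add]
    congr 1
    omega
end

section
/- Let n ≡ 0 (mod 4) and let q be an odd prime power with q ≡ 3 (mod 4). Let C_n = {m ∈ 𝔽_q^n : m_n² = m₁²+⋯+m_{n−1}²} be the cone in 𝔽_q^n. There exists a constant C > 0 (depending only on n) such that for every G ⊆ 𝔽_q^n, ‖Ĝ‖_{L²(C_n, dσ)} ≤ C ( |G|^{1/2} + |G| q^{−n/4} ), i.e., ((1/|C_n|) Σ_{x∈C_n} |Ĝ(x)|²)^{1/2} ≤ C ( |G|^{1/2} + |G|/q^{n/4} ), where Ĝ(x) = Σ_{m∈G} χ(−x·m). -/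
open Finset AddChar

/-- The cone `C_n = {m ∈ 𝔽_q^n : m_n² = m₁² + ⋯ + m_{n-1}²}`. -/
def cone (n : ℕ) (hn : 0 < n) (F : Type) [Field F] [Fintype F] [DecidableEq F] :
    Finset (Fin n → F) :=
  Finset.univ.filter fun m =>
    m ⟨n - 1, by omega⟩ ^ 2 =
      ∑ i ∈ Finset.univ.filter (fun i : Fin n => (i : ℕ) < n - 1), m i ^ 2
set_option linter.unusedSectionVars false

section
variable {F : Type} [Field F] [Fintype F] [DecidableEq F]

noncomputable def eta (F : Type) [Field F] [Fintype F] [DecidableEq F] : MulChar F ℂ :=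
  (quadraticChar F).ringHomComp (Int.castRingHom ℂ)

lemma char_ne_two (h : Odd (Fintype.card F)) : ringChar F ≠ 2 := fun h2 => by
  have h3 := FiniteField.even_card_of_char_two h2
  obtain ⟨k, hk⟩ := h; omega

lemma eta_ne_one (h : Odd (Fintype.card F)) : eta F ≠ 1 :=
  (MulChar.ringHomComp_ne_one_iff (RingHom.injective_int _)).mpr
    (quadraticChar_ne_one (char_ne_two h))

lemma eta_isQuadratic : (eta F).IsQuadratic :=
  (quadraticChar_isQuadratic F).comp _

lemma eta_neg_one (h4 : Fintype.card F % 4 = 3) : eta F (-1) = -1 := by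
  have h : quadraticChar F (-1) = -1 :=
    quadraticChar_neg_one_iff_not_isSquare.mpr
      (fun hs => by rw [FiniteField.isSquare_neg_one_iff] at hs; exact hs h4)
  have h2 : (eta F) (-1) = ((quadraticChar F (-1) : ℤ) : ℂ) := rfl
  rw [h2, h]; norm_num

lemma eta_mul_self {a : F} (ha : a ≠ 0) : eta F a * eta F a = 1 := by
  have : quadraticChar F a ^ 2 = 1 := quadraticChar_sq_one ha
  have : (quadraticChar F a : ℂ) * (quadraticChar F a : ℂ) = 1 := by
    rw [← sq]; exact_mod_cast congrArg (Int.cast : ℤ → ℂ) this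
  simpa [eta, MulChar.ringHomComp] using this

lemma gauss_sq (h : Odd (Fintype.card F)) (h4 : Fintype.card F % 4 = 3)
    {χ : AddChar F ℂ} (hχ : χ ≠ 1) :
    gaussSum (eta F) χ ^ 2 = -(Fintype.card F : ℂ) := by
  rw [gaussSum_sq (eta_ne_one h) eta_isQuadratic (IsPrimitive.of_ne_one hχ), eta_neg_one h4]
  ring

lemma sum_chi_mul {χ : AddChar F ℂ} (hχ : χ ≠ 1) (b : F) :
    ∑ t : F, χ (t * b) = if b = 0 then (Fintype.card F : ℂ) else 0 :=
  by rw [sum_mulShift b (IsPrimitive.of_ne_one hχ)]; split <;> simp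

lemma sum_chi_sq (hodd : Odd (Fintype.card F)) {χ : AddChar F ℂ} (hχ : χ ≠ 1)
    {a : F} (ha : a ≠ 0) :
    ∑ s : F, χ (a * s ^ 2) = eta F a * gaussSum (eta F) χ := by
  have hfib : ∑ s : F, χ (a * s ^ 2)
      = ∑ y : F, ∑ s ∈ univ.filter (fun s : F => s ^ 2 = y), χ (a * s ^ 2) :=
    (Finset.sum_fiberwise univ (fun s : F => s ^ 2) (fun s => χ (a * s ^ 2))).symm
  have hcard : ∀ y : F,
      (((univ.filter (fun s : F => s ^ 2 = y)).card : ℤ)) = quadraticChar F y + 1 := by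
    intro y
    have := quadraticChar_card_sqrts (char_ne_two hodd) y
    rwa [show ({x : F | x ^ 2 = y}).toFinset = univ.filter (fun s : F => s ^ 2 = y) by
      ext s; simp] at this
  have hinner : ∀ y : F, ∑ s ∈ univ.filter (fun s : F => s ^ 2 = y), χ (a * s ^ 2)
      = (eta F y + 1) * χ (a * y) := by
    intro y
    rw [Finset.sum_congr rfl (fun s hs => by
      rw [show s ^ 2 = y from (Finset.mem_filter.mp hs).2]), Finset.sum_const,
      nsmul_eq_mul]
    congr 1
    have : (((univ.filter (fun s : F => s ^ 2 = y)).card : ℤ) : ℂ)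
        = ((quadraticChar F y : ℤ) : ℂ) + 1 := by rw [hcard y]; push_cast; ring
    simpa [eta] using this
  rw [hfib]
  simp_rw [hinner, add_mul, one_mul, Finset.sum_add_distrib]
  have h0 : ∑ y : F, χ (a * y) = 0 := by
    have := sum_chi_mul hχ a
    simp only [mul_comm] at this ⊢
    rw [this]; simp [ha]
  rw [h0, add_zero]
  have hgs : ∑ y : F, eta F y * χ (a * y) = gaussSum (eta F) (χ.mulShift a) := by
    simp [gaussSum, AddChar.mulShift_apply]
  rw [hgs]
  have hms := gaussSum_mulShift (eta F) χ (Units.mk0 a ha)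
  have : gaussSum (eta F) (χ.mulShift a) =
      eta F a * (eta F a * gaussSum (eta F) (χ.mulShift a)) := by
    rw [← mul_assoc, eta_mul_self ha, one_mul]
  rw [this, show ((Units.mk0 a ha : Fˣ) : F) = a from rfl] at *
  rw [hms]

lemma gauss_quad (hodd : Odd (Fintype.card F)) {χ : AddChar F ℂ} (hχ : χ ≠ 1)
    {a : F} (ha : a ≠ 0) (b : F) :
    ∑ s : F, χ (a * s ^ 2 + b * s)
      = eta F a * gaussSum (eta F) χ * χ (-(b ^ 2) / (4 * a)) := by
  have h2 : (2 : F) ≠ 0 := Ring.two_ne_zero (char_ne_two hodd)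
  have h4 : (4 : F) ≠ 0 := by
    have : (4 : F) = 2 * 2 := by norm_num
    rw [this]; exact mul_ne_zero h2 h2
  have key : ∀ s : F, a * s ^ 2 + b * s
      = a * (s + b / (2 * a)) ^ 2 + -(b ^ 2) / (4 * a) := by
    intro s; field_simp; ring
  simp_rw [key, AddChar.map_add_eq_mul, ← Finset.sum_mul]
  congr 1
  rw [← sum_chi_sq hodd hχ ha]
  exact Fintype.sum_equiv (Equiv.addRight (b / (2 * a))) _ _ (fun s => rfl)

lemma addchar_map_sum {A M : Type*} [AddCommMonoid A] [CommMonoid M] (ψ : AddChar A M)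
    {ι : Type*} (s : Finset ι) (f : ι → A) :
    ψ (∑ i ∈ s, f i) = ∏ i ∈ s, ψ (f i) := by
  induction s using Finset.cons_induction with
  | empty => simp
  | cons a s ha ih => rw [Finset.sum_cons, Finset.prod_cons, AddChar.map_add_eq_mul, ih]

variable {n : ℕ}

def lastIdx (n : ℕ) (hn : 0 < n) : Fin n := ⟨n - 1, by omega⟩

noncomputable def Qs (n : ℕ) (hn : 0 < n) (F : Type) [Field F] [Fintype F] [DecidableEq F]
    (y : Fin n → F) : F :=
  y (lastIdx n hn) ^ 2 - ∑ i ∈ univ.filter (fun i : Fin n => (i : ℕ) < n - 1), y i ^ 2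

lemma filter_eq_erase (hn : 0 < n) :
    univ.filter (fun i : Fin n => (i : ℕ) < n - 1) = univ.erase (lastIdx n hn) := by
  ext i
  have := i.isLt
  simp only [Finset.mem_filter, Finset.mem_univ, true_and, Finset.mem_erase, and_true,
    Ne, Fin.ext_iff, lastIdx]
  omega

lemma sum_chi_dot {χ : AddChar F ℂ} (hχ : χ ≠ 1) (y : Fin n → F) :
    ∑ x : Fin n → F, χ (∑ i, x i * y i)
      = if y = 0 then (Fintype.card F : ℂ) ^ n else 0 := by
  have h1 : ∀ x : Fin n → F, χ (∑ i, x i * y i) = ∏ i, χ (x i * y i) := fun x =>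
    addchar_map_sum χ univ _
  simp_rw [h1]
  rw [show (Finset.univ : Finset (Fin n → F)) = Fintype.piFinset (fun _ => univ) by
    rw [Fintype.piFinset_univ]]
  rw [← Finset.prod_univ_sum (fun _ : Fin n => (univ : Finset F)) (fun i s => χ (s * y i))]
  simp_rw [sum_chi_mul hχ]
  by_cases hy : y = 0
  · simp [hy, Finset.prod_const, Finset.card_univ]
  · obtain ⟨i, hi⟩ := Function.ne_iff.mp hy
    rw [if_neg hy]
    exact Finset.prod_eq_zero (Finset.mem_univ i) (by simp only [Pi.zero_apply] at hi; simp [hi])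

lemma sum_chi_quad_form (hn : 0 < n) (hn4 : n % 4 = 0) (hodd : Odd (Fintype.card F))
    (h4 : Fintype.card F % 4 = 3) {χ : AddChar F ℂ} (hχ : χ ≠ 1)
    {t : F} (ht : t ≠ 0) (y : Fin n → F) :
    ∑ x : Fin n → F,
        χ (t * ((∑ i ∈ univ.erase (lastIdx n hn), x i ^ 2) - x (lastIdx n hn) ^ 2)
          + ∑ i, x i * y i)
      = -((Fintype.card F : ℂ) ^ (n / 2)) * χ (Qs n hn F y / (4 * t)) := by
  set L := lastIdx n hn with hL
  set c : Fin n → F := fun i => if i = L then -1 else 1 with hc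
  have hct : ∀ i, c i * t ≠ 0 := by
    intro i
    refine mul_ne_zero ?_ ht
    by_cases h : i = L <;> simp [hc, h]
  have hcard_erase : (univ.erase L).card = n - 1 := by
    rw [Finset.card_erase_of_mem (Finset.mem_univ L), Finset.card_univ, Fintype.card_fin]
  have key : ∀ x : Fin n → F,
      t * ((∑ i ∈ univ.erase L, x i ^ 2) - x L ^ 2) + ∑ i, x i * y i
        = ∑ i, (c i * t * x i ^ 2 + y i * x i) := by
    intro x
    rw [Finset.sum_add_distrib]
    have e1 : ∑ i, c i * t * x i ^ 2
        = c L * t * x L ^ 2 + ∑ i ∈ univ.erase L, c i * t * x i ^ 2 :=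
      (Finset.add_sum_erase _ _ (Finset.mem_univ L)).symm
    have e2 : ∑ i ∈ univ.erase L, c i * t * x i ^ 2 = ∑ i ∈ univ.erase L, t * x i ^ 2 :=
      Finset.sum_congr rfl fun i hi => by
        rw [hc]; simp only [if_neg (Finset.mem_erase.mp hi).1]; ring
    have e3 : ∑ i, y i * x i = ∑ i, x i * y i :=
      Finset.sum_congr rfl fun i _ => mul_comm _ _
    rw [e1, e2, e3, ← Finset.mul_sum]
    simp only [hc, if_pos rfl]
    ring
  simp_rw [key, addchar_map_sum χ univ]
  rw [show (Finset.univ : Finset (Fin n → F)) = Fintype.piFinset (fun _ => univ) by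
    rw [Fintype.piFinset_univ]]
  rw [← Finset.prod_univ_sum (fun _ : Fin n => (univ : Finset F))
    (fun i s => χ (c i * t * s ^ 2 + y i * s))]
  rw [Finset.prod_congr rfl fun i _ => gauss_quad hodd hχ (hct i) (y i)]
  rw [Finset.prod_mul_distrib, Finset.prod_mul_distrib]
  have hA : ∏ i, eta F (c i * t) = -1 := by
    rw [← Finset.mul_prod_erase _ _ (Finset.mem_univ L)]
    have e2 : ∏ i ∈ univ.erase L, eta F (c i * t) = eta F t ^ (n - 1) := by
      have h' : ∀ i ∈ univ.erase L, eta F (c i * t) = eta F t := by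
        intro i hi
        have hci : c i = 1 := by simp [hc, (Finset.mem_erase.mp hi).1]
        rw [hci, one_mul]
      rw [Finset.prod_congr rfl h', Finset.prod_const, hcard_erase]
    have hcL : c L = -1 := by simp [hc]
    have e1 : eta F (c L * t) = eta F (-1) * eta F t := by
      rw [hcL, ← map_mul]
    rw [e1, e2, mul_assoc, ← pow_succ', Nat.sub_add_cancel hn]
    have epow : eta F t ^ n = 1 := by
      have h1 : n = 2 * (n / 2) := by omega
      rw [h1, pow_mul, sq, eta_mul_self ht, one_pow]
    rw [epow, mul_one, eta_neg_one h4]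
  have hB : ∏ _i : Fin n, gaussSum (eta F) χ = (Fintype.card F : ℂ) ^ (n / 2) := by
    rw [Finset.prod_const, Finset.card_univ, Fintype.card_fin]
    have h1 : n = 2 * (n / 2) := by omega
    have h2 : n / 2 = 2 * (n / 4) := by omega
    calc gaussSum (eta F) χ ^ n = (gaussSum (eta F) χ ^ 2) ^ (n / 2) := by
          rw [← pow_mul, ← h1]
      _ = (-(Fintype.card F : ℂ)) ^ (n / 2) := by rw [gauss_sq hodd h4 hχ]
      _ = ((-(Fintype.card F : ℂ)) ^ 2) ^ (n / 4) := by rw [← pow_mul, ← h2]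
      _ = ((Fintype.card F : ℂ) ^ 2) ^ (n / 4) := by rw [neg_sq]
      _ = (Fintype.card F : ℂ) ^ (n / 2) := by rw [← pow_mul, ← h2]
  have hC : ∏ i, χ (-(y i ^ 2) / (4 * (c i * t))) = χ (Qs n hn F y / (4 * t)) := by
    rw [← addchar_map_sum χ univ]
    congr 1
    have e1 : ∑ i, -(y i ^ 2) / (4 * (c i * t))
        = -(y L ^ 2) / (4 * (c L * t)) + ∑ i ∈ univ.erase L, -(y i ^ 2) / (4 * (c i * t)) :=
      (Finset.add_sum_erase _ _ (Finset.mem_univ L)).symm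
    have e2 : ∑ i ∈ univ.erase L, -(y i ^ 2) / (4 * (c i * t))
        = (-(∑ i ∈ univ.erase L, y i ^ 2)) / (4 * t) := by
      have h' : ∀ i ∈ univ.erase L, -(y i ^ 2) / (4 * (c i * t)) = -(y i ^ 2) / (4 * t) := by
        intro i hi
        have hci : c i = 1 := by simp [hc, (Finset.mem_erase.mp hi).1]
        rw [hci, one_mul]
      rw [Finset.sum_congr rfl h', ← Finset.sum_div, ← Finset.sum_neg_distrib]
    have hcL : c L = -1 := by simp [hc]
    have e3 : -(y L ^ 2) / (4 * (c L * t)) = y L ^ 2 / (4 * t) := by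
      rw [hcL]
      rw [show (4 : F) * (-1 * t) = -(4 * t) by ring, div_neg, neg_div, neg_neg]
    rw [e1, e2, e3, ← add_div, Qs, filter_eq_erase hn, ← sub_eq_add_neg]
  rw [hA, hB, hC]; ring

lemma sum_inv_shift (hodd : Odd (Fintype.card F)) {χ : AddChar F ℂ} (hχ : χ ≠ 1) (c : F) :
    ∑ t ∈ univ.erase (0 : F), χ (c / (4 * t))
      = if c = 0 then (Fintype.card F : ℂ) - 1 else -1 := by
  have h2 : (2 : F) ≠ 0 := Ring.two_ne_zero (char_ne_two hodd)
  have h4 : (4 : F) ≠ 0 := by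
    rw [show (4 : F) = 2 * 2 by norm_num]; exact mul_ne_zero h2 h2
  by_cases hc : c = 0
  · subst hc
    simp only [if_pos rfl, zero_div, AddChar.map_zero_eq_one]
    rw [Finset.sum_const, Finset.card_erase_of_mem (Finset.mem_univ _), Finset.card_univ,
      nsmul_eq_mul, mul_one]
    have : (1 : ℕ) ≤ Fintype.card F := Fintype.card_pos
    push_cast [this]
    ring
  · rw [if_neg hc]
    have hbij : ∑ t ∈ univ.erase (0 : F), χ (c / (4 * t))
        = ∑ u ∈ univ.erase (0 : F), χ u := by
      refine Finset.sum_nbij' (i := fun t => c / (4 * t)) (j := fun u => c / (4 * u))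
        ?_ ?_ ?_ ?_ ?_
      · intro t ht
        simp only [Finset.mem_erase, Finset.mem_univ, and_true] at ht ⊢
        exact div_ne_zero hc (mul_ne_zero h4 ht)
      · intro u hu
        simp only [Finset.mem_erase, Finset.mem_univ, and_true] at hu ⊢
        exact div_ne_zero hc (mul_ne_zero h4 hu)
      · intro t ht
        simp only [Finset.mem_erase, Finset.mem_univ, and_true] at ht
        field_simp
      · intro u hu
        simp only [Finset.mem_erase, Finset.mem_univ, and_true] at hu
        field_simp
      · intro t ht; rfl
    rw [hbij]
    have h0 : χ 0 + ∑ u ∈ univ.erase (0 : F), χ u = ∑ u : F, χ u :=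
      Finset.add_sum_erase _ _ (Finset.mem_univ 0)
    rw [AddChar.sum_eq_zero_of_ne_one hχ, AddChar.map_zero_eq_one] at h0
    linear_combination h0

lemma qS_eq (hn : 0 < n) (hn4 : n % 4 = 0) (hodd : Odd (Fintype.card F))
    (h4 : Fintype.card F % 4 = 3) {χ : AddChar F ℂ} (hχ : χ ≠ 1) (y : Fin n → F) :
    (Fintype.card F : ℂ) * ∑ x ∈ cone n hn F, χ (∑ i, x i * y i)
      = (if y = 0 then (Fintype.card F : ℂ) ^ n else 0)
        + -((Fintype.card F : ℂ) ^ (n / 2))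
          * (if Qs n hn F y = 0 then (Fintype.card F : ℂ) - 1 else -1) := by
  set L := lastIdx n hn with hL
  set D : (Fin n → F) → F := fun x => (∑ i ∈ univ.erase L, x i ^ 2) - x L ^ 2 with hD
  have hcone : cone n hn F = univ.filter (fun x => D x = 0) := by
    unfold cone
    ext x
    simp only [Finset.mem_filter, Finset.mem_univ, true_and, hD]
    rw [filter_eq_erase hn, sub_eq_zero]
    exact ⟨fun h => h.symm, fun h => h.symm⟩
  have lhs_eq : (Fintype.card F : ℂ) * ∑ x ∈ cone n hn F, χ (∑ i, x i * y i)
      = ∑ x : Fin n → F, (∑ t : F, χ (t * D x)) * χ (∑ i, x i * y i) := by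
    simp_rw [sum_chi_mul hχ, ite_mul, zero_mul]
    rw [← Finset.sum_filter, ← hcone, Finset.mul_sum]
  rw [lhs_eq]
  simp_rw [Finset.sum_mul, ← AddChar.map_add_eq_mul]
  rw [Finset.sum_comm]
  rw [← Finset.add_sum_erase _ _ (Finset.mem_univ (0 : F))]
  have hzero : ∑ x : Fin n → F, χ (0 * D x + ∑ i, x i * y i)
      = if y = 0 then (Fintype.card F : ℂ) ^ n else 0 := by
    simp_rw [zero_mul, zero_add]
    exact sum_chi_dot hχ y
  have herase : ∑ t ∈ univ.erase (0 : F), ∑ x : Fin n → F, χ (t * D x + ∑ i, x i * y i)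
      = -((Fintype.card F : ℂ) ^ (n / 2))
          * (if Qs n hn F y = 0 then (Fintype.card F : ℂ) - 1 else -1) := by
    rw [Finset.sum_congr rfl fun t ht =>
      sum_chi_quad_form hn hn4 hodd h4 hχ (Finset.mem_erase.mp ht).1 y]
    rw [← Finset.mul_sum, sum_inv_shift hodd hχ]
  rw [hzero, herase]

noncomputable def Sval (n : ℕ) (hn : 0 < n) (F : Type) [Field F] [Fintype F] [DecidableEq F]
    (y : Fin n → F) : ℝ :=
  ((if y = 0 then (Fintype.card F : ℝ) ^ n else 0)
    + -((Fintype.card F : ℝ) ^ (n / 2))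
        * (if Qs n hn F y = 0 then (Fintype.card F : ℝ) - 1 else -1)) / (Fintype.card F : ℝ)

lemma S_eq (hn : 0 < n) (hn4 : n % 4 = 0) (hodd : Odd (Fintype.card F))
    (h4 : Fintype.card F % 4 = 3) {χ : AddChar F ℂ} (hχ : χ ≠ 1) (y : Fin n → F) :
    ∑ x ∈ cone n hn F, χ (∑ i, x i * y i) = ((Sval n hn F y : ℝ) : ℂ) := by
  have hq : (Fintype.card F : ℂ) ≠ 0 := Nat.cast_ne_zero.mpr Fintype.card_ne_zero
  apply mul_left_cancel₀ hq
  rw [qS_eq hn hn4 hodd h4 hχ y]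
  have : ((Sval n hn F y : ℝ) : ℂ)
      = ((if y = 0 then (Fintype.card F : ℂ) ^ n else 0)
          + -((Fintype.card F : ℂ) ^ (n / 2))
              * (if Qs n hn F y = 0 then (Fintype.card F : ℂ) - 1 else -1))
        / (Fintype.card F : ℂ) := by
    unfold Sval
    split_ifs <;> push_cast <;> ring
  rw [this, mul_div_cancel₀ _ hq]

lemma card_cone_eq (hn : 0 < n) (hn4 : n % 4 = 0) (hodd : Odd (Fintype.card F))
    (h4 : Fintype.card F % 4 = 3) {χ : AddChar F ℂ} (hχ : χ ≠ 1) :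
    ((cone n hn F).card : ℝ) = Sval n hn F 0 := by
  have h := S_eq hn hn4 hodd h4 hχ (0 : Fin n → F)
  simp only [Pi.zero_apply, mul_zero, Finset.sum_const_zero, AddChar.map_zero_eq_one,
    Finset.sum_const, nsmul_eq_mul, mul_one] at h
  exact_mod_cast h

lemma q_ge_three (h4 : Fintype.card F % 4 = 3) : 3 ≤ Fintype.card F := by omega

lemma Sval_zero_ge (hn4 : n % 4 = 0) (hn : 0 < n) (h4 : Fintype.card F % 4 = 3) :
    (2 / 3 : ℝ) * (Fintype.card F : ℝ) ^ (n - 1) ≤ Sval n hn F 0 := by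
  have hn4' : 4 ≤ n := by omega
  have hq3 : (3 : ℝ) ≤ (Fintype.card F : ℝ) := by exact_mod_cast q_ge_three h4
  have hq0 : (0 : ℝ) < (Fintype.card F : ℝ) := by linarith
  set q : ℝ := (Fintype.card F : ℝ)
  have hQ0 : Qs n hn F (0 : Fin n → F) = 0 := by simp [Qs]
  rw [Sval, if_pos rfl, if_pos hQ0]
  rw [le_div_iff₀ hq0]
  have e1 : q ^ n = q ^ (n - 1) * q := by
    rw [← pow_succ]; congr 1; omega
  have e2 : q ^ (n / 2) * q ≤ q ^ (n - 1) := by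
    rw [← pow_succ]
    exact pow_le_pow_right₀ (by linarith) (by omega)
  have hpow_pos : (0 : ℝ) < q ^ (n - 1) := pow_pos hq0 _
  have e3 : q ^ (n / 2) * (q - 1) ≤ q ^ (n / 2) * q := by
    have := pow_pos hq0 (n / 2); nlinarith
  nlinarith

lemma Sval_le (hn : 0 < n) (hn4 : n % 4 = 0) (h4 : Fintype.card F % 4 = 3) (y : Fin n → F) :
    Sval n hn F y ≤ (if y = 0 then (Fintype.card F : ℝ) ^ (n - 1) else 0)
      + (Fintype.card F : ℝ) ^ (n / 2 - 1) := by
  have hn4' : 4 ≤ n := by omega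
  have hq3 : (3 : ℝ) ≤ (Fintype.card F : ℝ) := by exact_mod_cast q_ge_three h4
  have hq0 : (0 : ℝ) < (Fintype.card F : ℝ) := by linarith
  set q : ℝ := (Fintype.card F : ℝ)
  have hpow2 : (0 : ℝ) < q ^ (n / 2 - 1) := pow_pos hq0 _
  have e1 : q ^ n = q ^ (n - 1) * q := by
    rw [← pow_succ]; congr 1; omega
  have e2 : q ^ (n / 2) = q ^ (n / 2 - 1) * q := by
    rw [← pow_succ]; congr 1; omega
  rw [Sval, div_le_iff₀ hq0]
  split_ifs with h1 h2 <;>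
    nlinarith [mul_pos hpow2 hq0, mul_pos (mul_pos hpow2 hq0) hq0]

lemma conj_chi (χ : AddChar F ℂ) (a : F) : (starRingEnd ℂ) (χ a) = χ (-a) := by
  have hp : 0 < ringChar F := Nat.pos_of_ne_zero (CharP.ringChar_ne_zero_of_finite F)
  rw [AddChar.starComp_apply hp, AddChar.inv_apply]

lemma T_eq (hn : 0 < n) (hn4 : n % 4 = 0) (hodd : Odd (Fintype.card F))
    (h4 : Fintype.card F % 4 = 3) {χ : AddChar F ℂ} (hχ : χ ≠ 1) (G : Finset (Fin n → F)) :
    ∑ x ∈ cone n hn F, ‖∑ m ∈ G, χ (-(∑ i, x i * m i))‖ ^ (2 : ℕ)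
      = ∑ m ∈ G, ∑ m' ∈ G, Sval n hn F (m' - m) := by
  have key : ∀ z : ℂ, ((‖z‖ ^ 2 : ℝ) : ℂ) = z * (starRingEnd ℂ) z := by
    intro z; rw [Complex.sq_norm]; push_cast; rw [Complex.mul_conj]
  have main : ((∑ x ∈ cone n hn F,
      ‖∑ m ∈ G, χ (-(∑ i, x i * m i))‖ ^ (2 : ℕ) : ℝ) : ℂ)
      = ((∑ m ∈ G, ∑ m' ∈ G, Sval n hn F (m' - m) : ℝ) : ℂ) := by
    push_cast
    calc ∑ x ∈ cone n hn F, ((‖∑ m ∈ G, χ (-(∑ i, x i * m i))‖ : ℝ) : ℂ) ^ (2 : ℕ)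
        = ∑ x ∈ cone n hn F, ((∑ m ∈ G, χ (-(∑ i, x i * m i)))
            * (starRingEnd ℂ) (∑ m' ∈ G, χ (-(∑ i, x i * m' i)))) := by
          refine Finset.sum_congr rfl fun x _ => ?_
          rw [← key]; push_cast; ring
      _ = ∑ x ∈ cone n hn F, ∑ m ∈ G, ∑ m' ∈ G, χ (∑ i, x i * (m' - m) i) := by
          refine Finset.sum_congr rfl fun x _ => ?_
          rw [map_sum, Finset.sum_mul_sum]
          refine Finset.sum_congr rfl fun m _ => Finset.sum_congr rfl fun m' _ => ?_
          rw [conj_chi, neg_neg, ← AddChar.map_add_eq_mul]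
          congr 1
          simp only [Pi.sub_apply, mul_sub, Finset.sum_sub_distrib]
          ring
      _ = ∑ m ∈ G, ∑ m' ∈ G, ∑ x ∈ cone n hn F, χ (∑ i, x i * (m' - m) i) := by
          rw [Finset.sum_comm]
          exact Finset.sum_congr rfl fun m _ => Finset.sum_comm
      _ = ∑ m ∈ G, ∑ m' ∈ G, ((Sval n hn F (m' - m) : ℝ) : ℂ) :=
          Finset.sum_congr rfl fun m _ => Finset.sum_congr rfl fun m' _ =>
            S_eq hn hn4 hodd h4 hχ (m' - m)
  exact_mod_cast main

lemma T_le (hn : 0 < n) (hn4 : n % 4 = 0) (h4 : Fintype.card F % 4 = 3)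
    (G : Finset (Fin n → F)) :
    ∑ m ∈ G, ∑ m' ∈ G, Sval n hn F (m' - m)
      ≤ (G.card : ℝ) * (Fintype.card F : ℝ) ^ (n - 1)
        + (G.card : ℝ) ^ 2 * (Fintype.card F : ℝ) ^ (n / 2 - 1) := by
  set q : ℝ := (Fintype.card F : ℝ) with hqdef
  have step1 : ∑ m ∈ G, ∑ m' ∈ G, Sval n hn F (m' - m)
      ≤ ∑ m ∈ G, ∑ m' ∈ G, ((if m' - m = 0 then q ^ (n - 1) else 0) + q ^ (n / 2 - 1)) :=
    Finset.sum_le_sum fun m _ => Finset.sum_le_sum fun m' _ => Sval_le hn hn4 h4 _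
  refine step1.trans ?_
  have hq0 : (0 : ℝ) ≤ q := by rw [hqdef]; positivity
  have step2 : ∀ m ∈ G, ∑ m' ∈ G, ((if m' - m = 0 then q ^ (n - 1) else 0) + q ^ (n / 2 - 1))
      ≤ q ^ (n - 1) + (G.card : ℝ) * q ^ (n / 2 - 1) := by
    intro m _
    rw [Finset.sum_add_distrib, Finset.sum_const, nsmul_eq_mul]
    have heq : ∑ m' ∈ G, (if m' - m = 0 then q ^ (n - 1) else 0)
        = if m ∈ G then q ^ (n - 1) else 0 := by
      simp only [sub_eq_zero]
      exact Finset.sum_ite_eq' G m fun _ => q ^ (n - 1)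
    rw [heq]
    have h1 : (if m ∈ G then q ^ (n - 1) else 0) ≤ q ^ (n - 1) := by
      by_cases h : m ∈ G
      · simp [h]
      · simp only [h, if_false]; positivity
    linarith
  calc ∑ m ∈ G, ∑ m' ∈ G, ((if m' - m = 0 then q ^ (n - 1) else 0) + q ^ (n / 2 - 1))
      ≤ ∑ _m ∈ G, (q ^ (n - 1) + (G.card : ℝ) * q ^ (n / 2 - 1)) := Finset.sum_le_sum step2
    _ = (G.card : ℝ) * q ^ (n - 1) + (G.card : ℝ) ^ 2 * q ^ (n / 2 - 1) := by
        rw [Finset.sum_const, nsmul_eq_mul]; ring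

end

lemma sqrt_add_le' {a b : ℝ} (ha : 0 ≤ a) (hb : 0 ≤ b) :
    Real.sqrt (a + b) ≤ Real.sqrt a + Real.sqrt b := by
  have h := Real.sqrt_le_sqrt (show a + b ≤ (Real.sqrt a + Real.sqrt b) ^ 2 by
    nlinarith [Real.sq_sqrt ha, Real.sq_sqrt hb, Real.sqrt_nonneg a, Real.sqrt_nonneg b,
      mul_nonneg (Real.sqrt_nonneg a) (Real.sqrt_nonneg b)])
  rwa [Real.sqrt_sq (by positivity)] at h

lemma sqrt_mul_32 {a : ℝ} (ha : 0 ≤ a) : Real.sqrt (3 / 2 * a) ≤ 2 * Real.sqrt a := by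
  rw [Real.sqrt_mul (by norm_num) a]
  have h2 : Real.sqrt (3 / 2) ≤ 2 := by
    have ha : Real.sqrt (3 / 2) ≤ Real.sqrt 4 := Real.sqrt_le_sqrt (by norm_num)
    have hb : Real.sqrt 4 = 2 := by
      rw [show (4 : ℝ) = 2 ^ 2 by norm_num, Real.sqrt_sq (by norm_num)]
    linarith
  nlinarith [Real.sqrt_nonneg a, Real.sqrt_nonneg (3 / 2 : ℝ)]

/-- Lemma 3.1: cone restriction estimate. If `n ≡ 0 (mod 4)` and `q ≡ 3 (mod 4)`,
then for any `G ⊆ 𝔽_q^n`, `‖Ĝ‖_{L²(C_n, dσ)} ≤ C (|G|^{1/2} + |G| q^{-n/4})`. -/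
theorem cone_restriction (n : ℕ) (hn : 0 < n) (hn4 : n % 4 = 0) :
    ∃ C : ℝ, 0 < C ∧
      ∀ (F : Type) [Field F] [Fintype F] [DecidableEq F],
        Odd (Fintype.card F) →
        Fintype.card F % 4 = 3 →
        ∀ χ : AddChar F ℂ, χ ≠ 1 →
        ∀ G : Finset (Fin n → F),
          ((1 / ((cone n hn F).card : ℝ)) *
              ∑ x ∈ cone n hn F,
                ‖∑ m ∈ G, χ (-(∑ i, x i * m i))‖ ^ (2 : ℕ)) ^ ((1 : ℝ) / 2) ≤
            C * ((G.card : ℝ) ^ ((1 : ℝ) / 2) +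
              (G.card : ℝ) / (Fintype.card F : ℝ) ^ ((n : ℝ) / 4)) := by
  refine ⟨2, by norm_num, ?_⟩
  intro F _ _ _ hodd h4 χ hχ G
  have hn4' : 4 ≤ n := by omega
  set q : ℝ := (Fintype.card F : ℝ) with hqdef
  have hq3 : (3 : ℝ) ≤ q := by rw [hqdef]; exact_mod_cast q_ge_three h4
  have hq0 : (0 : ℝ) < q := by linarith
  have hcard : ((cone n hn F).card : ℝ) = Sval n hn F 0 := card_cone_eq hn hn4 hodd h4 hχ
  have hcard_lb : (2 / 3 : ℝ) * q ^ (n - 1) ≤ ((cone n hn F).card : ℝ) := by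
    rw [hcard]; exact Sval_zero_ge hn4 hn h4
  have hpow_pos : (0 : ℝ) < q ^ (n - 1) := pow_pos hq0 _
  have hcard_pos : (0 : ℝ) < ((cone n hn F).card : ℝ) :=
    lt_of_lt_of_le (by positivity) hcard_lb
  set T : ℝ := ∑ x ∈ cone n hn F,
      ‖∑ m ∈ G, χ (-(∑ i, x i * m i))‖ ^ (2 : ℕ) with hTdef
  have hT_nonneg : 0 ≤ T := Finset.sum_nonneg fun x _ => by positivity
  have hT_le : T ≤ (G.card : ℝ) * q ^ (n - 1) + (G.card : ℝ) ^ 2 * q ^ (n / 2 - 1) := by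
    rw [hTdef, T_eq hn hn4 hodd h4 hχ G]; exact T_le hn hn4 h4 G
  set B : ℝ := 3 / 2 * (G.card : ℝ) + 3 / 2 * ((G.card : ℝ) ^ 2 / q ^ (n / 2)) with hBdef
  have hB_nonneg : 0 ≤ B := by rw [hBdef]; positivity
  have hkey : q ^ (n / 2 - 1) * q ^ (n / 2) = q ^ (n - 1) := by
    rw [← pow_add]; congr 1; omega
  have hmid : (G.card : ℝ) * q ^ (n - 1) + (G.card : ℝ) ^ 2 * q ^ (n / 2 - 1)
      = (2 / 3) * q ^ (n - 1) * B := by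
    have e : (G.card : ℝ) ^ 2 * q ^ (n / 2 - 1)
        = (G.card : ℝ) ^ 2 / q ^ (n / 2) * q ^ (n - 1) := by
      rw [div_mul_eq_mul_div, ← hkey]
      field_simp
    rw [hBdef, e]; ring
  have hinner : (1 / ((cone n hn F).card : ℝ)) * T ≤ B := by
    rw [one_div, inv_mul_eq_div, div_le_iff₀ hcard_pos]
    calc T ≤ (G.card : ℝ) * q ^ (n - 1) + (G.card : ℝ) ^ 2 * q ^ (n / 2 - 1) := hT_le
      _ = (2 / 3) * q ^ (n - 1) * B := hmid
      _ ≤ ((cone n hn F).card : ℝ) * B := mul_le_mul_of_nonneg_right hcard_lb hB_nonneg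
      _ = B * ((cone n hn F).card : ℝ) := mul_comm _ _
  have hLHS_nonneg : 0 ≤ (1 / ((cone n hn F).card : ℝ)) * T := by positivity
  rw [← Real.sqrt_eq_rpow, ← Real.sqrt_eq_rpow]
  have step1 : Real.sqrt ((1 / ((cone n hn F).card : ℝ)) * T) ≤ Real.sqrt B :=
    Real.sqrt_le_sqrt hinner
  refine step1.trans ?_
  have step2 : Real.sqrt B ≤ Real.sqrt (3 / 2 * (G.card : ℝ))
      + Real.sqrt (3 / 2 * ((G.card : ℝ) ^ 2 / q ^ (n / 2))) := by
    rw [hBdef]; exact sqrt_add_le' (by positivity) (by positivity)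
  refine step2.trans ?_
  have hrpow : q ^ ((n : ℝ) / 4) = q ^ (n / 4 : ℕ) := by
    rw [← Real.rpow_natCast q (n / 4)]
    congr 1
    have hdvd : (4 : ℕ) ∣ n := Nat.dvd_of_mod_eq_zero hn4
    have : ((n / 4 : ℕ) : ℝ) * 4 = (n : ℝ) := by exact_mod_cast Nat.div_mul_cancel hdvd
    linarith
  have hsq : Real.sqrt ((G.card : ℝ) ^ 2 / q ^ (n / 2)) = (G.card : ℝ) / q ^ (n / 4 : ℕ) := by
    rw [show (G.card : ℝ) ^ 2 / q ^ (n / 2) = ((G.card : ℝ) / q ^ (n / 4 : ℕ)) ^ 2 by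
      rw [div_pow, ← pow_mul]; congr 2; omega]
    exact Real.sqrt_sq (by positivity)
  have b1 : Real.sqrt (3 / 2 * (G.card : ℝ)) ≤ 2 * Real.sqrt (G.card : ℝ) :=
    sqrt_mul_32 (by positivity)
  have b2 : Real.sqrt (3 / 2 * ((G.card : ℝ) ^ 2 / q ^ (n / 2)))
      ≤ 2 * ((G.card : ℝ) / q ^ ((n : ℝ) / 4)) := by
    rw [hrpow, ← hsq]
    exact sqrt_mul_32 (by positivity)
  calc Real.sqrt (3 / 2 * (G.card : ℝ)) + Real.sqrt (3 / 2 * ((G.card : ℝ) ^ 2 / q ^ (n / 2)))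
      ≤ 2 * Real.sqrt (G.card : ℝ) + 2 * ((G.card : ℝ) / q ^ ((n : ℝ) / 4)) := add_le_add b1 b2
    _ = 2 * (Real.sqrt (G.card : ℝ) + (G.card : ℝ) / q ^ ((n : ℝ) / 4)) := by ring
end
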